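/- Let w_1, w_2 > 0 with 4w_1 ≥ 3w_2, and define α*_1 = (−4w_1 + 3w_2 + 2√(w_1(4w_1−3w_2)))/(3w_2) and α*_2 = (2w_1 − √(w_1(4w_1−3w_2)))/(3w_2). Then (α*_1, α*_2) is a critical point of the two-round durable-good revenue G̃(α_1,α_2) = α_1(1−α_1)w_1 + α_2(1−α_1−α_2)w_2(1−α_1); that is, ∂G̃/∂α_1(α*_1,α*_2) = 0 and ∂G̃/∂α_2(α*_1,α*_2) = 0. -/

import Mathlib

/-- Two-round durable-good revenue
`G̃(α₁,α₂) = α₁(1−α₁)w₁ + α₂(1−(α₁+α₂))w₂(1−α₁)` (initial stock `y₀ = 1`). -/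
noncomputable def twoRoundRevenue (w₁ w₂ a₁ a₂ : ℝ) : ℝ :=
  a₁ * (1 - a₁) * w₁ + a₂ * (1 - (a₁ + a₂)) * w₂ * (1 - a₁)

/-- The interior critical first-round share
`α₁* = (−4w₁ + 3w₂ + 2√(w₁(4w₁−3w₂)))/(3w₂)`. -/
noncomputable def alpha1Star (w₁ w₂ : ℝ) : ℝ :=
  (-4 * w₁ + 3 * w₂ + 2 * Real.sqrt (w₁ * (4 * w₁ - 3 * w₂))) / (3 * w₂)

/-- The interior critical second-round share
`α₂* = (2w₁ − √(w₁(4w₁−3w₂)))/(3w₂)`. -/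
noncomputable def alpha2Star (w₁ w₂ : ℝ) : ℝ :=
  (2 * w₁ - Real.sqrt (w₁ * (4 * w₁ - 3 * w₂))) / (3 * w₂)

private lemma deriv_a1 (w₁ w₂ B A : ℝ) :
    HasDerivAt (fun x : ℝ => twoRoundRevenue w₁ w₂ x B)
      ((1 - 2 * A) * w₁ + B * w₂ * (-2 + 2 * A + B)) A := by
  have hx : HasDerivAt (fun x : ℝ => x) 1 A := hasDerivAt_id A
  have h1 : HasDerivAt (fun x : ℝ => 1 - x) (-1) A := by
    have h := (hasDerivAt_const A (1 : ℝ)).sub hx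
    simp only [zero_sub] at h
    exact h
  have h2 : HasDerivAt (fun x : ℝ => 1 - (x + B)) (-1) A := by
    have h := (hasDerivAt_const A (1 : ℝ)).sub (hx.add_const B)
    simp only [zero_sub] at h
    exact h
  have := ((hx.mul h1).mul_const w₁).add
    ((((hasDerivAt_const A B).mul h2).mul_const w₂).mul h1)
  refine this.congr_deriv ?_
  simp only [Pi.mul_apply]
  ring

private lemma deriv_a2 (w₁ w₂ A B : ℝ) :
    HasDerivAt (fun x : ℝ => twoRoundRevenue w₁ w₂ A x)
      ((1 - A - 2 * B) * w₂ * (1 - A)) B := by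
  have hx : HasDerivAt (fun x : ℝ => x) 1 B := hasDerivAt_id B
  have h2 : HasDerivAt (fun x : ℝ => 1 - (A + x)) (-1) B := by
    have h := (hasDerivAt_const B (1 : ℝ)).sub ((hasDerivAt_const B A).add hx)
    simp only [zero_add, zero_sub] at h
    exact h
  have := (hasDerivAt_const B (A * (1 - A) * w₁)).add
    (((hx.mul h2).mul_const w₂).mul_const (1 - A))
  refine this.congr_deriv ?_
  ring

/-- interior solution of the `N = 2` first-order system.
`(α₁*, α₂*)` is a critical point of the two-round durable-good revenue. -/
theorem two_round_interior_critical_point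
    (w₁ w₂ : ℝ) (h₁ : 0 < w₁) (h₂ : 0 < w₂) (h : 3 * w₂ ≤ 4 * w₁) :
    HasDerivAt (fun x : ℝ => twoRoundRevenue w₁ w₂ x (alpha2Star w₁ w₂)) 0
        (alpha1Star w₁ w₂) ∧
      HasDerivAt (fun x : ℝ => twoRoundRevenue w₁ w₂ (alpha1Star w₁ w₂) x)
        0 (alpha2Star w₁ w₂) := by
  set s := Real.sqrt (w₁ * (4 * w₁ - 3 * w₂)) with hs
  have hnn : 0 ≤ w₁ * (4 * w₁ - 3 * w₂) := by nlinarith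
  have hsq : s * s = w₁ * (4 * w₁ - 3 * w₂) := Real.mul_self_sqrt hnn
  have hw₂ : (3 : ℝ) * w₂ ≠ 0 := by positivity
  set A := alpha1Star w₁ w₂ with hA
  set B := alpha2Star w₁ w₂ with hB
  have hA' : A = (-4 * w₁ + 3 * w₂ + 2 * s) / (3 * w₂) := rfl
  have hB' : B = (2 * w₁ - s) / (3 * w₂) := rfl
  constructor
  · have hd := deriv_a1 w₁ w₂ B A
    have hz : (1 - 2 * A) * w₁ + B * w₂ * (-2 + 2 * A + B) = 0 := by
      rw [hA', hB']
      field_simp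
      nlinarith [hsq]
    rwa [hz] at hd
  · have hd := deriv_a2 w₁ w₂ A B
    have hz : (1 - A - 2 * B) * w₂ * (1 - A) = 0 := by
      rw [hA', hB']
      field_simp
      nlinarith [hsq]
    rwa [hz] at hd
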